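/- For every integer N ≥ 2, the determinant of the cosine matrix C_N equals (−1)^{N⁺(N⁺+1)/2} · N^{(N⁺+1)/2} / 2^{N⁺+1}. -/

import Mathlib

/-- The discrete cosine matrix `C_N`, of size `(N⁺+1) × (N⁺+1)` with `N⁺ = ⌊N/2⌋`:
its `(m,n)` entry is `c_n · cos(2πmn/N)` where `c_n = 1/2` if `n = 0` or if `N` is even
and `n = N/2`, and `c_n = 1` otherwise. -/
noncomputable def cosMatrix (N : ℕ) : Matrix (Fin (N / 2 + 1)) (Fin (N / 2 + 1)) ℝ :=
  Matrix.of fun m n =>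
    (if (n : ℕ) = 0 ∨ (N % 2 = 0 ∧ (n : ℕ) = N / 2) then (1 / 2 : ℝ) else 1) *
      Real.cos (2 * Real.pi * (m : ℕ) * (n : ℕ) / N)


open Real Finset Polynomial Polynomial.Chebyshev

lemma cos_geom_sum (N : ℕ) (hN : 0 < N) (a : ℤ) :
    ∑ n ∈ Finset.range N, Real.cos (2 * π * a * n / N) =
      if (N : ℤ) ∣ a then (N : ℝ) else 0 := by
  by_cases h : (N : ℤ) ∣ a
  · rw [if_pos h]
    obtain ⟨t, rfl⟩ := h
    have h1 : ∀ n ∈ Finset.range N, Real.cos (2 * π * (((N : ℤ) * t : ℤ) : ℝ) * n / N) = 1 := by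
      intro n _
      have harg : 2 * π * (((N : ℤ) * t : ℤ) : ℝ) * (n : ℝ) / (N : ℝ)
          = ((t * n : ℤ) : ℝ) * (2 * π) := by
        push_cast; field_simp
      rw [harg, Real.cos_int_mul_two_pi]
    rw [Finset.sum_congr rfl h1, Finset.sum_const, Finset.card_range, nsmul_eq_mul, mul_one]
  · rw [if_neg h]
    set z : ℂ := Complex.exp ((2 * π * a / N : ℝ) * Complex.I) with hz
    have hzn : ∀ n : ℕ, (z ^ n).re = Real.cos (2 * π * a * n / N) := by
      intro n
      rw [hz, ← Complex.exp_nat_mul]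
      have : (n : ℂ) * ((2 * π * a / N : ℝ) * Complex.I) =
          ((2 * π * a * n / N : ℝ) : ℂ) * Complex.I := by
        push_cast; ring
      rw [this, Complex.exp_ofReal_mul_I_re]
    have hz1 : z ≠ 1 := by
      intro hzeq
      rw [hz, Complex.exp_eq_one_iff] at hzeq
      obtain ⟨k, hk⟩ := hzeq
      apply h
      have him : 2 * π * (a : ℝ) / N = k * (2 * π) := by simpa using congrArg Complex.im hk
      -- him : 2 * π * a / N = k * (2 * π)  (roughly)
      have hNne : (N : ℝ) ≠ 0 := by positivity
      have hπ : (π : ℝ) ≠ 0 := Real.pi_ne_zero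
      have h2π : (2 * π : ℝ) ≠ 0 := by positivity
      have : (a : ℝ) = (k : ℝ) * N := by
        have hNne' : (N : ℝ) ≠ 0 := hNne
        field_simp at him
        exact mul_left_cancel₀ h2π (by linear_combination (2 * π) * him)
      have : (a : ℤ) = k * N := by exact_mod_cast this
      exact ⟨k, by linarith⟩
    have hzN : z ^ N = 1 := by
      rw [hz, ← Complex.exp_nat_mul]
      have : (N : ℂ) * (((2 * π * a / N : ℝ) : ℂ) * Complex.I) = (a : ℂ) * (2 * π * Complex.I) := by
        have hNne : (N : ℂ) ≠ 0 := by exact_mod_cast Nat.cast_ne_zero.2 hN.ne'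
        push_cast
        field_simp
      rw [this, Complex.exp_int_mul_two_pi_mul_I]
    have hsum : ∑ n ∈ Finset.range N, z ^ n = 0 := by
      rw [geom_sum_eq hz1, hzN]
      simp
    calc ∑ n ∈ Finset.range N, Real.cos (2 * π * a * n / N)
        = ∑ n ∈ Finset.range N, (z ^ n).re := by simp [hzn]
      _ = (∑ n ∈ Finset.range N, z ^ n).re := by rw [Complex.re_sum]
      _ = 0 := by rw [hsum]; rfl

lemma fold_sum (N : ℕ) (hN : 2 ≤ N) (f : ℕ → ℝ) (hsym : ∀ n ≤ N, f (N - n) = f n) :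
    2 * ∑ n ∈ Finset.range (N / 2 + 1),
        (if n = 0 ∨ (N % 2 = 0 ∧ n = N / 2) then (1 / 2 : ℝ) else 1) * f n
      = ∑ n ∈ Finset.range N, f n := by
  have hdN : N / 2 + 1 ≤ N := by omega
  have hsplit : ∑ n ∈ Finset.range N, f n
      = ∑ n ∈ Finset.range (N / 2 + 1), f n + ∑ n ∈ Finset.Ico (N / 2 + 1) N, f n := by
    rw [Finset.range_eq_Ico, ← Finset.sum_Ico_consecutive f (Nat.zero_le (N / 2 + 1)) hdN, Finset.range_eq_Ico]
  have hrefl : ∑ n ∈ Finset.Ico (N / 2 + 1) N, f n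
      = ∑ n ∈ Finset.Ico 1 (N - N / 2), f n := by
    apply Finset.sum_nbij' (i := fun n => N - n) (j := fun n => N - n)
    · intro a ha
      simp only [Finset.mem_Ico] at *
      omega
    · intro a ha
      simp only [Finset.mem_Ico] at *
      omega
    · intro a ha
      simp only [Finset.mem_Ico] at ha
      omega
    · intro a ha
      simp only [Finset.mem_Ico] at ha
      omega
    · intro a ha
      simp only [Finset.mem_Ico] at ha
      exact (hsym a (by omega)).symm
  calc 2 * ∑ n ∈ Finset.range (N / 2 + 1),
        (if n = 0 ∨ (N % 2 = 0 ∧ n = N / 2) then (1 / 2 : ℝ) else 1) * f n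
      = ∑ n ∈ Finset.range (N / 2 + 1),
        (f n + if ¬(n = 0 ∨ (N % 2 = 0 ∧ n = N / 2)) then f n else 0) := by
        rw [Finset.mul_sum]
        refine Finset.sum_congr rfl fun n _ => ?_
        by_cases h : n = 0 ∨ (N % 2 = 0 ∧ n = N / 2) <;> simp [h] <;> ring
    _ = ∑ n ∈ Finset.range (N / 2 + 1), f n
        + ∑ n ∈ (Finset.range (N / 2 + 1)).filter
            (fun n => ¬(n = 0 ∨ (N % 2 = 0 ∧ n = N / 2))), f n := by
        rw [Finset.sum_add_distrib, Finset.sum_filter]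
    _ = ∑ n ∈ Finset.range (N / 2 + 1), f n + ∑ n ∈ Finset.Ico 1 (N - N / 2), f n := by
        congr 1
        apply Finset.sum_congr _ fun _ _ => rfl
        ext n
        simp only [Finset.mem_filter, Finset.mem_range, Finset.mem_Ico]
        omega
    _ = ∑ n ∈ Finset.range N, f n := by rw [hsplit, hrefl]

lemma cheb_deg_coeff (n : ℕ) :
    (T ℝ (n : ℤ)).natDegree ≤ n ∧ (T ℝ (n : ℤ)).coeff n = 2 ^ (n - 1) := by
  induction n using Nat.twoStepInduction with
  | zero => simp [T_zero]
  | one => simp [T_one]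
  | more n ih1 ih2 =>
    have hrec : T ℝ ((n + 2 : ℕ) : ℤ) = 2 * X * T ℝ ((n + 1 : ℕ) : ℤ) - T ℝ (n : ℤ) := by
      push_cast
      exact T_add_two ℝ n
    obtain ⟨hd0, hc0⟩ := ih1
    obtain ⟨hd1, hc1⟩ := ih2
    constructor
    · rw [hrec]
      refine (natDegree_sub_le _ _).trans (max_le ?_ (hd0.trans (by omega)))
      refine (natDegree_mul_le).trans ?_
      have h1 : (2 * X : ℝ[X]).natDegree ≤ 1 :=
        (natDegree_mul_le).trans (by simpa using natDegree_X_le)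
      omega
    · have h2X : (2 * X * T ℝ ((n + 1 : ℕ) : ℤ)) = C 2 * (X * T ℝ ((n + 1 : ℕ) : ℤ)) := by
        rw [mul_assoc]
        congr 1
      rw [hrec, coeff_sub, h2X, coeff_C_mul, coeff_X_mul]
      have hc0' : (T ℝ (n : ℤ)).coeff (n + 2) = 0 :=
        coeff_eq_zero_of_natDegree_lt (by omega)
      rw [hc0', hc1]
      simp only [Nat.add_sub_cancel, sub_zero]
      rw [show n + 2 - 1 = n + 1 by omega, pow_succ]
      ring

lemma cosMatrix_sq (N : ℕ) (hN : 2 ≤ N) :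
    cosMatrix N * cosMatrix N = ((N : ℝ) / 4) • 1 := by
  have hNpos : 0 < N := by omega
  have hNR : (0 : ℝ) < N := by exact_mod_cast hNpos
  ext m k
  rw [Matrix.mul_apply]
  -- entry = c k * ∑_{n} c n * f n  with f n = cos(2πmn/N) cos(2πkn/N)
  set ck : ℝ := (if (k : ℕ) = 0 ∨ (N % 2 = 0 ∧ (k : ℕ) = N / 2) then (1 / 2 : ℝ) else 1) with hck
  set f : ℕ → ℝ := fun n =>
    Real.cos (2 * π * m * n / N) * Real.cos (2 * π * k * n / N) with hf
  have step1 : ∑ n : Fin (N / 2 + 1), cosMatrix N m n * cosMatrix N n k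
      = ck * ∑ n ∈ Finset.range (N / 2 + 1),
          (if n = 0 ∨ (N % 2 = 0 ∧ n = N / 2) then (1 / 2 : ℝ) else 1) * f n := by
    rw [Finset.mul_sum, ← Fin.sum_univ_eq_sum_range]
    refine Finset.sum_congr rfl fun n _ => ?_
    simp only [cosMatrix, Matrix.of_apply, hf, hck]
    ring
  rw [step1]
  -- symmetry of f
  have hsym : ∀ n ≤ N, f (N - n) = f n := by
    intro n hn
    have hc : ∀ j : ℕ, Real.cos (2 * π * j * (N - n : ℕ) / N) = Real.cos (2 * π * j * n / N) := by
      intro j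
      have hcast : ((N - n : ℕ) : ℝ) = (N : ℝ) - n := by
        push_cast [hn]; ring
      have harg : 2 * π * j * ((N : ℝ) - n) / N = (j : ℕ) * (2 * π) - 2 * π * j * n / N := by
        field_simp
      rw [hcast, harg, Real.cos_nat_mul_two_pi_sub]
    simp only [hf, hc]
  have hfold := fold_sum N hN f hsym
  -- product-to-sum on f
  have hpts : ∑ n ∈ Finset.range N, f n
      = (1 / 2) * ((if (N : ℤ) ∣ ((m : ℕ) + (k : ℕ)) then (N : ℝ) else 0)
          + (if (N : ℤ) ∣ ((m : ℕ) - (k : ℕ) : ℤ) then (N : ℝ) else 0)) := by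
    rw [← cos_geom_sum N hNpos ((m : ℕ) + (k : ℕ)), ← cos_geom_sum N hNpos ((m : ℕ) - (k : ℕ))]
    rw [← Finset.sum_add_distrib, Finset.mul_sum]
    refine Finset.sum_congr rfl fun n _ => ?_
    have e1 : 2 * π * (((m : ℕ) + (k : ℕ) : ℤ) : ℝ) * n / N
        = 2 * π * m * n / N + 2 * π * k * n / N := by push_cast; field_simp
    have e2 : 2 * π * (((m : ℕ) - (k : ℕ) : ℤ) : ℝ) * n / N
        = 2 * π * m * n / N - 2 * π * k * n / N := by push_cast; field_simp
    rw [e1, e2, Real.cos_add, Real.cos_sub]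
    simp only [hf]
    ring
  -- combine
  have hsum : ∑ n ∈ Finset.range (N / 2 + 1),
      (if n = 0 ∨ (N % 2 = 0 ∧ n = N / 2) then (1 / 2 : ℝ) else 1) * f n
      = (1 / 4) * ((if (N : ℤ) ∣ ((m : ℕ) + (k : ℕ)) then (N : ℝ) else 0)
          + (if (N : ℤ) ∣ ((m : ℕ) - (k : ℕ) : ℤ) then (N : ℝ) else 0)) := by
    have := hfold
    rw [hpts] at this
    linarith
  rw [hsum]
  have hm := m.isLt
  have hk := k.isLt
  -- now case analysis
  have hdvd2 : (N : ℤ) ∣ ((m : ℕ) - (k : ℕ) : ℤ) ↔ (m : ℕ) = (k : ℕ) := by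
    constructor
    · rintro ⟨c, hc⟩
      have h1 : ((m : ℕ) : ℤ) < N := by exact_mod_cast Nat.lt_of_lt_of_le m.isLt (by omega)
      have h2 : ((k : ℕ) : ℤ) < N := by exact_mod_cast Nat.lt_of_lt_of_le k.isLt (by omega)
      have h3 : (0 : ℤ) ≤ (m : ℕ) := Int.natCast_nonneg _
      have h4 : (0 : ℤ) ≤ (k : ℕ) := Int.natCast_nonneg _
      have h5 : (N : ℤ) * c < N := by omega
      have h6 : -(N : ℤ) < N * c := by omega
      have hNZ : (0 : ℤ) < N := by exact_mod_cast hNpos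
      have hc0 : c = 0 := by
        by_contra hc0
        rcases lt_or_gt_of_ne hc0 with h | h
        · nlinarith [h5, h6, h, hNZ]
        · nlinarith [h5, h6, h, hNZ]
      rw [hc0, mul_zero] at hc
      omega
    · intro h; rw [h]; simp
  have hdvd1 : (N : ℤ) ∣ (((m : ℕ) + (k : ℕ) : ℕ) : ℤ) ↔
      ((m : ℕ) = 0 ∧ (k : ℕ) = 0) ∨ (N % 2 = 0 ∧ (m : ℕ) = N / 2 ∧ (k : ℕ) = N / 2) := by
    rw [Int.natCast_dvd_natCast]
    constructor
    · rintro ⟨c, hc⟩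
      have hmd : (m : ℕ) ≤ N / 2 := by omega
      have hkd : (k : ℕ) ≤ N / 2 := by omega
      have hcle : c ≤ 1 := by
        by_contra hcge
        push_neg at hcge
        have h2 : N * 2 ≤ N * c := Nat.mul_le_mul_left N hcge
        omega
      interval_cases c <;> omega
    · intro h
      rcases h with ⟨h1, h2⟩ | ⟨h1, h2, h3⟩
      · simp [h1, h2]
      · have : (m : ℕ) + (k : ℕ) = N := by omega
        rw [this]
  by_cases hmk : (m : ℕ) = (k : ℕ)
  · have hmk' : m = k := Fin.ext hmk
    rw [if_pos (hdvd2.2 hmk)]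
    subst hmk'
    simp only [Matrix.smul_apply, Matrix.one_apply_eq, smul_eq_mul, mul_one]
    by_cases hc : (m : ℕ) = 0 ∨ (N % 2 = 0 ∧ (m : ℕ) = N / 2)
    · have hd1 : (N : ℤ) ∣ (((m : ℕ) + (m : ℕ) : ℕ) : ℤ) := by
        rw [hdvd1]
        rcases hc with h | ⟨h1, h2⟩
        · left; exact ⟨h, h⟩
        · right; exact ⟨h1, h2, h2⟩
      rw [hck, if_pos hc]
      push_cast at hd1 ⊢
      rw [if_pos hd1]
      ring
    · have hd1 : ¬ (N : ℤ) ∣ (((m : ℕ) + (m : ℕ) : ℕ) : ℤ) := by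
        rw [hdvd1]
        tauto
      rw [hck, if_neg hc]
      push_cast at hd1 ⊢
      rw [if_neg hd1]
      ring
  · have hne : m ≠ k := fun h => hmk (congrArg Fin.val h)
    rw [if_neg (fun h => hmk (hdvd2.1 h))]
    have hd1 : ¬ (N : ℤ) ∣ (((m : ℕ) + (k : ℕ) : ℕ) : ℤ) := by
      rw [hdvd1]
      rintro (⟨h1, h2⟩ | ⟨h1, h2, h3⟩)
      · exact hmk (h1.trans h2.symm)
      · exact hmk (h2.trans h3.symm)
    push_cast at hd1 ⊢
    rw [if_neg hd1]
    simp [Matrix.one_apply_ne hne]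

/-- For every integer `N ≥ 2`,
`det C_N = (−1)^{N⁺(N⁺+1)/2} · N^{(N⁺+1)/2} / 2^{N⁺+1}` where `N⁺ = ⌊N/2⌋`. -/
theorem det_cosMatrix (N : ℕ) (hN : 2 ≤ N) :
    (cosMatrix N).det =
      (-1 : ℝ) ^ (N / 2 * (N / 2 + 1) / 2) * Real.sqrt N ^ (N / 2 + 1) / 2 ^ (N / 2 + 1) := by
  have hNpos : 0 < N := by omega
  have hNR : (0 : ℝ) < N := by exact_mod_cast hNpos
  set d := N / 2 with hd
  set x : Fin (d + 1) → ℝ := fun m => Real.cos (2 * π * m / N) with hx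
  set M : Matrix (Fin (d + 1)) (Fin (d + 1)) ℝ := Matrix.of fun k n =>
    (if (n : ℕ) = 0 ∨ (N % 2 = 0 ∧ (n : ℕ) = N / 2) then (1 / 2 : ℝ) else 1) *
      (T ℝ ((n : ℕ) : ℤ)).coeff k with hM
  -- factorization
  have hfact : cosMatrix N = Matrix.vandermonde x * M := by
    ext m n
    rw [Matrix.mul_apply]
    simp only [cosMatrix, Matrix.of_apply, hM, Matrix.vandermonde_apply]
    have : ∑ k : Fin (d + 1), x m ^ (k : ℕ) *
        ((if (n : ℕ) = 0 ∨ (N % 2 = 0 ∧ (n : ℕ) = N / 2) then (1 / 2 : ℝ) else 1) *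
          (T ℝ ((n : ℕ) : ℤ)).coeff k)
        = (if (n : ℕ) = 0 ∨ (N % 2 = 0 ∧ (n : ℕ) = N / 2) then (1 / 2 : ℝ) else 1) *
          ∑ k ∈ Finset.range (d + 1), (T ℝ ((n : ℕ) : ℤ)).coeff k * x m ^ k := by
      rw [Finset.mul_sum, ← Fin.sum_univ_eq_sum_range]
      exact Finset.sum_congr rfl fun k _ => by ring
    rw [this]
    congr 1
    have hdeg : (T ℝ ((n : ℕ) : ℤ)).natDegree < d + 1 :=
      Nat.lt_of_le_of_lt (cheb_deg_coeff (n : ℕ)).1 n.isLt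
    rw [← Polynomial.eval_eq_sum_range' hdeg]
    have := T_real_cos (2 * π * m / N) ((n : ℕ) : ℤ)
    rw [hx]
    simp only []
    rw [this]
    congr 1
    push_cast
    field_simp
  -- determinant of M
  have hMtri : M.BlockTriangular id := by
    intro i j hij
    simp only [hM, Matrix.of_apply]
    have : (T ℝ ((j : ℕ) : ℤ)).coeff i = 0 :=
      coeff_eq_zero_of_natDegree_lt (Nat.lt_of_le_of_lt (cheb_deg_coeff (j : ℕ)).1 hij)
    rw [this, mul_zero]
  have hMdet : M.det = ∏ i : Fin (d + 1), M i i := Matrix.det_of_upperTriangular hMtri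
  have hMpos : 0 < M.det := by
    rw [hMdet]
    apply Finset.prod_pos
    intro i _
    simp only [hM, Matrix.of_apply]
    have h1 : (0 : ℝ) < (T ℝ ((i : ℕ) : ℤ)).coeff i := by
      rw [(cheb_deg_coeff (i : ℕ)).2]
      positivity
    split_ifs <;> positivity
  -- monotonicity of x
  have hxlt : ∀ i j : Fin (d + 1), i < j → x j < x i := by
    intro i j hij
    have hij' : (i : ℕ) < (j : ℕ) := hij
    apply Real.cos_lt_cos_of_nonneg_of_le_pi
    · positivity
    · rw [div_le_iff₀ hNR]
      have h2j : 2 * (j : ℕ) ≤ N := by omega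
      have h2j' : 2 * ((j : ℕ) : ℝ) ≤ N := by exact_mod_cast h2j
      nlinarith [Real.pi_pos]
    · have hcast : ((i : ℕ) : ℝ) < (j : ℕ) := by exact_mod_cast hij'
      gcongr
  -- Vandermonde determinant with sign extracted
  have hVdm : (Matrix.vandermonde x).det
      = (-1 : ℝ) ^ (d * (d + 1) / 2) * ∏ i : Fin (d + 1), ∏ j ∈ Finset.Ioi i, (x i - x j) := by
    rw [Matrix.det_vandermonde]
    have hinner : ∀ i : Fin (d + 1), ∏ j ∈ Finset.Ioi i, (x j - x i)
        = (-1 : ℝ) ^ (Finset.Ioi i).card * ∏ j ∈ Finset.Ioi i, (x i - x j) := by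
      intro i
      rw [← Finset.prod_const, ← Finset.prod_mul_distrib]
      exact Finset.prod_congr rfl fun j _ => by ring
    rw [Finset.prod_congr rfl fun i _ => hinner i, Finset.prod_mul_distrib,
      Finset.prod_pow_eq_pow_sum]
    have h2 : ∑ i : Fin (d + 1), (Finset.Ioi i).card = ∑ i ∈ Finset.range (d + 1), (d - i) := by
      rw [← Fin.sum_univ_eq_sum_range (fun i => d - i) (d + 1)]
      exact Finset.sum_congr rfl fun i _ => by rw [Fin.card_Ioi]; omega
    have h4 : ∑ i ∈ Finset.range (d + 1), (d - i) = ∑ i ∈ Finset.range (d + 1), i := by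
      rw [← Finset.sum_range_reflect (fun i => i) (d + 1)]
      exact Finset.sum_congr rfl fun i hi => by
        simp only [Finset.mem_range] at hi; omega
    have h3 : (∑ i ∈ Finset.range (d + 1), i) * 2 = (d + 1) * d := by
      rw [Finset.sum_range_id_mul_two (d + 1)]
      simp
    have hexp : ∑ i : Fin (d + 1), (Finset.Ioi i).card = d * (d + 1) / 2 := by
      have hce : (d + 1) * d = d * (d + 1) := Nat.mul_comm _ _
      omega
    rw [hexp]
  -- positive part
  set S : ℝ := (∏ i : Fin (d + 1), ∏ j ∈ Finset.Ioi i, (x i - x j)) * M.det with hS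
  have hSpos : 0 < S := by
    apply mul_pos _ hMpos
    apply Finset.prod_pos
    intro i _
    apply Finset.prod_pos
    intro j hj
    rw [Finset.mem_Ioi] at hj
    exact sub_pos.2 (hxlt i j hj)
  have hdet : (cosMatrix N).det = (-1 : ℝ) ^ (d * (d + 1) / 2) * S := by
    rw [hfact, Matrix.det_mul, hVdm, hS]
    ring
  -- square of determinant
  have hsq : (cosMatrix N).det ^ 2 = ((N : ℝ) / 4) ^ (d + 1) := by
    have h1 : ((cosMatrix N) * (cosMatrix N)).det = ((N : ℝ) / 4) ^ (d + 1) := by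
      rw [cosMatrix_sq N hN, Matrix.det_smul, Matrix.det_one, Fintype.card_fin, mul_one]
    rw [← h1, Matrix.det_mul]
    ring
  set R : ℝ := Real.sqrt N ^ (d + 1) / 2 ^ (d + 1) with hR
  have hRpos : 0 < R := by
    rw [hR]
    have : (0 : ℝ) < Real.sqrt N := Real.sqrt_pos.2 hNR
    positivity
  have hRsq : R ^ 2 = ((N : ℝ) / 4) ^ (d + 1) := by
    have h2 : (Real.sqrt N ^ (d + 1)) ^ 2 = (N : ℝ) ^ (d + 1) := by
      rw [← pow_mul, mul_comm, pow_mul, Real.sq_sqrt hNR.le]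
    have h4 : ((2 : ℝ) ^ (d + 1)) ^ 2 = 4 ^ (d + 1) := by
      rw [← pow_mul, mul_comm, pow_mul]
      norm_num
    rw [hR, div_pow, h2, h4, div_pow]
  have hS2 : S ^ 2 = R ^ 2 := by
    have h1 : ((-1 : ℝ) ^ (d * (d + 1) / 2)) ^ 2 = 1 := by
      rw [← pow_mul, mul_comm, pow_mul]
      norm_num
    calc S ^ 2 = ((-1 : ℝ) ^ (d * (d + 1) / 2)) ^ 2 * S ^ 2 := by rw [h1, one_mul]
      _ = ((cosMatrix N).det) ^ 2 := by rw [hdet]; ring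
      _ = ((N : ℝ) / 4) ^ (d + 1) := hsq
      _ = R ^ 2 := hRsq.symm
  have hSR : S = R := by
    have hfac : (S - R) * (S + R) = 0 := by linear_combination hS2
    rcases mul_eq_zero.1 hfac with h | h
    · linarith
    · linarith
  rw [hdet, hSR, hR, mul_div_assoc]
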